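/- Let 1 < p < 3, m ∈ ℝ, c > 0, a ∈ ℝ³, and R > 0; set β := (3−p)/(p−1) and φ(x) := ⟨a, x/|x|⟩. Suppose u, w, H : E_R → ℝ satisfy u < 1 and w > 0 on E_R and, as |x| → ∞: u(x) = 1 − (c/β)·|x|^{−β} + ((3−p)/2)·c·(m + φ(x))·|x|^{−2/(p−1)} + o(|x|^{−2/(p−1)}); w(x) = c·|x|^{−2/(p−1)}·[1 − (2m/(p−1) + ((3−p)/(p−1))·φ(x))/|x| + o(1/|x|)]; H(x) = (2/|x|)·[1 − (2m + ((3−p)/2)·φ(x))/|x| + o(1/|x|)]. Define I_p(x) := c^{(3p−7)/(3−p)}·((1/β)·(1/(1−u(x))))^{1/β}·[ c^{3−p} + ((c/β)·(1/(1−u(x))))²·w(x)^{3−p} − (c²/β)·(1/(1−u(x)))·w(x)^{2−p}·H(x) ]. Then I_p(x) → 2m·c^{1−p} as |x| → ∞. -/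

import Mathlib

noncomputable section

open scoped RealInnerProductSpace
open Asymptotics Filter

abbrev E3 : Type := EuclideanSpace ℝ (Fin 3)

/-- The filter of neighbourhoods of infinity in `ℝ³`, i.e. `|x| → ∞`. -/
def normAtTop : Filter E3 := Filter.comap (fun x : E3 => ‖x‖) Filter.atTop

lemma alg_key (p β c s t uu ww HH P Q S : ℝ)
    (hp : 1 < p) (hp3 : p < 3) (hc : 0 < c) (hs : 0 < s)
    (hβ : β = (3 - p) / (p - 1))
    (ht : t = s ^ β)
    (huu : uu < 1) (hww : 0 < ww)
    (hP : P = β / c * t * (1 - uu))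
    (hQ : Q = ww * (t * s) / c)
    (hS : S = HH * s / 2) :
    c ^ ((3 * p - 7) / (3 - p)) * (1 / β * (1 / (1 - uu))) ^ (1 / β) *
      (c ^ (3 - p)
        + (c / β * (1 / (1 - uu))) ^ 2 * ww ^ (3 - p)
        - c ^ 2 / β * (1 / (1 - uu)) * ww ^ (2 - p) * HH)
    = c ^ (1 - p) * (((P ^ (1 / β) * P * P)⁻¹) *
        (s * (P * P - 1) + s * (Q ^ (3 - p) - 1) - 2 * (s * (Q ^ (2 - p) * S * P - 1)))) := by
  have hp1 : (0:ℝ) < p - 1 := by linarith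
  have h3p : (0:ℝ) < 3 - p := by linarith
  have hβ0 : 0 < β := by rw [hβ]; positivity
  have ht0 : 0 < t := by rw [ht]; positivity
  have h1u : 0 < 1 - uu := by linarith
  have hP0 : 0 < P := by rw [hP]; positivity
  have hQ0 : 0 < Q := by rw [hQ]; positivity
  have hPB : 0 < P ^ (1/β) := Real.rpow_pos_of_pos hP0 _
  have hcB : 0 < c ^ (1/β) := Real.rpow_pos_of_pos hc _
  have ets : t * s = s ^ (β + 1) := by rw [ht, Real.rpow_add_one hs.ne']
  have e1 : (t * s) ^ (3 - p) = t * t := by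
    rw [ets, ← Real.rpow_mul hs.le]
    have : (β + 1) * (3 - p) = β + β := by rw [hβ]; field_simp; ring
    rw [this, Real.rpow_add hs, ← ht]
  have e2 : (t * s) ^ (2 - p) = t / s := by
    rw [ets, ← Real.rpow_mul hs.le]
    have : (β + 1) * (2 - p) = β - 1 := by rw [hβ]; field_simp; ring
    rw [this, Real.rpow_sub hs, Real.rpow_one, ← ht]
  have e3 : t ^ (1/β) = s := by
    rw [ht, ← Real.rpow_mul hs.le, mul_one_div_cancel hβ0.ne', Real.rpow_one]
  have hww' : ww = c * Q / (t * s) := by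
    rw [hQ]; field_simp
  have h1u' : 1 - uu = c * P / (β * t) := by
    rw [hP]; field_simp
  have hHH' : HH = 2 * S / s := by rw [hS]; field_simp
  have e4 : ww ^ (3 - p) = c ^ (3-p) * Q ^ (3-p) / (t * t) := by
    rw [hww', Real.div_rpow (by positivity) (by positivity),
      Real.mul_rpow hc.le hQ0.le, e1]
  have e5 : ww ^ (2 - p) = c ^ (2-p) * Q ^ (2-p) * s / t := by
    rw [hww', Real.div_rpow (by positivity) (by positivity),
      Real.mul_rpow hc.le hQ0.le, e2]
    field_simp
  have e6 : (1 / β * (1 / (1 - uu))) ^ (1/β) = s / (c ^ (1/β) * P ^ (1/β)) := by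
    have : 1 / β * (1 / (1 - uu)) = t / (c * P) := by
      rw [h1u']; field_simp
    rw [this, Real.div_rpow ht0.le (by positivity), e3,
      Real.mul_rpow hc.le hP0.le]
  have idA : c ^ ((3*p-7)/(3-p)) * c ^ (3-p) = c ^ (1-p) * c ^ (1/β) := by
    rw [← Real.rpow_add hc, ← Real.rpow_add hc]
    congr 1
    rw [hβ]
    field_simp
    ring
  have idB : c * c ^ (2-p) = c ^ (3-p) := by
    nth_rewrite 1 [← Real.rpow_one c]
    rw [← Real.rpow_add hc]; congr 1; ring
  have hcC : (0:ℝ) < c ^ (3-p) := Real.rpow_pos_of_pos hc _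
  have hcA : c ^ ((3*p-7)/(3-p)) = c ^ (1-p) * c ^ (1/β) / c ^ (3-p) := by
    rw [eq_div_iff hcC.ne']; exact idA
  have hcD : c ^ (2-p) = c ^ (3-p) / c := by
    rw [eq_div_iff hc.ne']; rw [mul_comm]; exact idB
  rw [e4, e5, e6, h1u', hHH', hcA, hcD]
  field_simp
  ring

lemma aux_P (p β c s uu f : ℝ) (hc : 0 < c) (hβ0 : 0 < β) (hs : 0 < s) :
    -(β/c) * ((uu - (1 - c / β * s ^ (-β) + (3 - p) / 2 * c * f * s ^ (-(β+1)))) * s ^ (β+1))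
      = s * (β / c * s ^ β * (1 - uu) - 1) + β * (3-p) / 2 * f := by
  have ht0 : (0:ℝ) < s ^ β := Real.rpow_pos_of_pos hs β
  have e1 : s ^ (β+1) = s ^ β * s := Real.rpow_add_one hs.ne' β
  have e2 : s ^ (-β) = (s ^ β)⁻¹ := Real.rpow_neg hs.le β
  have e3 : s ^ (-(β+1)) = (s ^ β * s)⁻¹ := by rw [Real.rpow_neg hs.le, e1]
  rw [e1, e2, e3]
  field_simp
  ring

lemma aux_Q (β c s ww g : ℝ) (hc : 0 < c) (hs : 0 < s) :
    (1/c) * ((ww - c * s ^ (-(β+1)) * (1 - g / s)) * s ^ (β+1+1))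
      = s * (ww * s ^ (β+1) / c - 1) + g := by
  have ht0 : (0:ℝ) < s ^ (β+1) := Real.rpow_pos_of_pos hs _
  have e1 : s ^ (β+1+1) = s ^ (β+1) * s := Real.rpow_add_one hs.ne' (β+1)
  have e2 : s ^ (-(β+1)) = (s ^ (β+1))⁻¹ := Real.rpow_neg hs.le (β+1)
  rw [e1, e2]
  field_simp
  ring

lemma aux_S (s HH k : ℝ) (hs : 0 < s) :
    (1/2) * ((HH - 2 / s * (1 - k / s)) * s ^ (2:ℝ))
      = s * (HH * s / 2 - 1) + k := by
  have e1 : s ^ (2:ℝ) = s * s := by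
    rw [show (2:ℝ) = ((2:ℕ):ℝ) by norm_num, Real.rpow_natCast]
    ring
  rw [e1]
  field_simp
  ring

lemma littleo_mul_rpow {f : E3 → ℝ} {k : ℝ}
    (h : f =o[normAtTop] fun x : E3 => ‖x‖ ^ (-k)) :
    Filter.Tendsto (fun x : E3 => f x * ‖x‖ ^ k) normAtTop (nhds 0) := by
  have hrt : Tendsto (fun x : E3 => ‖x‖) normAtTop atTop := tendsto_comap
  have hev : ∀ᶠ x : E3 in normAtTop, (0:ℝ) < ‖x‖ := hrt.eventually_gt_atTop 0
  rw [← Asymptotics.isLittleO_one_iff ℝ]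
  have h2 := h.mul_isBigO (Asymptotics.isBigO_refl (fun x : E3 => ‖x‖ ^ k) normAtTop)
  refine h2.trans_isBigO ?_
  refine Asymptotics.IsBigO.of_bound 1 ?_
  filter_upwards [hev] with x hx
  rw [← Real.rpow_add hx]
  simp

/-- Asymptotic evaluation of the integrand `I_p` of the monotone quantity
`F_p`: under the stated expansions of `u`, `w` (playing the role of `|∇u|`) and `H`
(the mean curvature of the level sets), with `β = (3-p)/(p-1)` and `φ(x) = ⟨a, x/|x|⟩`,
one has `I_p(x) → 2m·c^{1-p}` as `|x| → ∞`. -/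
theorem p_harmonic_integrand_limit (p m c R : ℝ) (a : E3)
    (hp : 1 < p) (hp' : p < 3) (hc : 0 < c)
    (β : ℝ) (hβ : β = (3 - p) / (p - 1))
    (φ : E3 → ℝ) (hφ : ∀ x : E3, φ x = ⟪a, x⟫ / ‖x‖)
    (u w H : E3 → ℝ)
    (hub : ∀ x : E3, R < ‖x‖ → u x < 1)
    (hwb : ∀ x : E3, R < ‖x‖ → 0 < w x)
    (hu : (fun x : E3 => u x -
        (1 - c / β * ‖x‖ ^ (-β)
          + (3 - p) / 2 * c * (m + φ x) * ‖x‖ ^ (-(2 / (p - 1)))))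
      =o[normAtTop] fun x : E3 => ‖x‖ ^ (-(2 / (p - 1))))
    (hw : (fun x : E3 => w x -
        c * ‖x‖ ^ (-(2 / (p - 1)))
          * (1 - (2 * m / (p - 1) + (3 - p) / (p - 1) * φ x) / ‖x‖))
      =o[normAtTop] fun x : E3 => ‖x‖ ^ (-(2 / (p - 1)) - 1))
    (hH : (fun x : E3 => H x -
        2 / ‖x‖ * (1 - (2 * m + (3 - p) / 2 * φ x) / ‖x‖))
      =o[normAtTop] fun x : E3 => ‖x‖ ^ (-2 : ℝ))
    (I : E3 → ℝ)
    (hI : ∀ x : E3, R < ‖x‖ → I x =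
      c ^ ((3 * p - 7) / (3 - p)) * (1 / β * (1 / (1 - u x))) ^ (1 / β) *
        (c ^ (3 - p)
          + (c / β * (1 / (1 - u x))) ^ 2 * w x ^ (3 - p)
          - c ^ 2 / β * (1 / (1 - u x)) * w x ^ (2 - p) * H x)) :
    Filter.Tendsto I normAtTop (nhds (2 * m * c ^ (1 - p))) := by
  have hp1 : (0:ℝ) < p - 1 := by linarith
  have h3p : (0:ℝ) < 3 - p := by linarith
  have hβ0 : 0 < β := by rw [hβ]; positivity
  have hrt : Tendsto (fun x : E3 => ‖x‖) normAtTop atTop := tendsto_comap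
  have hev : ∀ᶠ x : E3 in normAtTop, max R 1 < ‖x‖ := hrt.eventually_gt_atTop _
  have hs_of : ∀ x : E3, max R 1 < ‖x‖ → (0:ℝ) < ‖x‖ := fun x hx =>
    lt_of_lt_of_le one_pos (le_of_lt ((le_max_right R 1).trans_lt hx))
  have hR_of : ∀ x : E3, max R 1 < ‖x‖ → R < ‖x‖ := fun x hx =>
    (le_max_left R 1).trans_lt hx
  have hβ1 : -(2 / (p - 1)) = -(β + 1) := by rw [hβ]; field_simp; ring
  rw [hβ1] at hu hw
  set P : E3 → ℝ := fun x => β / c * ‖x‖ ^ β * (1 - u x) with hPdef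
  set Q : E3 → ℝ := fun x => w x * ‖x‖ ^ (β+1) / c with hQdef
  set S : E3 → ℝ := fun x => H x * ‖x‖ / 2 with hSdef
  -- Step 1: normalized remainders tend to 0
  have hP0 : Tendsto (fun x : E3 => ‖x‖ * (P x - 1) + β * (3-p) / 2 * (m + φ x))
      normAtTop (nhds 0) := by
    have h1 := (littleo_mul_rpow hu).const_mul (-(β/c))
    rw [mul_zero] at h1
    refine h1.congr' ?_
    filter_upwards [hev] with x hx
    simp only [hPdef]
    exact aux_P p β c ‖x‖ (u x) (m + φ x) hc hβ0 (hs_of x hx)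
  have hQ0 : Tendsto (fun x : E3 => ‖x‖ * (Q x - 1)
      + (2 * m / (p - 1) + (3 - p) / (p - 1) * φ x)) normAtTop (nhds 0) := by
    have hbw : (fun x : E3 => ‖x‖ ^ (-(β+1) - 1)) = fun x : E3 => ‖x‖ ^ (-(β+1+1)) := by
      funext x; congr 1; ring
    rw [hbw] at hw
    have h1 := (littleo_mul_rpow hw).const_mul (1/c)
    rw [mul_zero] at h1
    refine h1.congr' ?_
    filter_upwards [hev] with x hx
    simp only [hQdef]
    exact aux_Q β c ‖x‖ (w x) (2 * m / (p - 1) + (3 - p) / (p - 1) * φ x) hc (hs_of x hx)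
  have hS0 : Tendsto (fun x : E3 => ‖x‖ * (S x - 1)
      + (2 * m + (3 - p) / 2 * φ x)) normAtTop (nhds 0) := by
    have h1 := (littleo_mul_rpow (k := (2:ℝ)) hH).const_mul (1/2)
    rw [mul_zero] at h1
    refine h1.congr' ?_
    filter_upwards [hev] with x hx
    simp only [hSdef]
    exact aux_S ‖x‖ (H x) (2 * m + (3 - p) / 2 * φ x) (hs_of x hx)
  -- Step 2: boundedness
  have hφO : φ =O[normAtTop] (fun _ : E3 => (1:ℝ)) := by
    refine Asymptotics.IsBigO.of_bound ‖a‖ ?_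
    filter_upwards [hev] with x hx
    have hs0 := hs_of x hx
    rw [hφ x, Real.norm_eq_abs, norm_one, mul_one, abs_div, abs_of_pos hs0]
    rw [div_le_iff₀ hs0]
    exact abs_real_inner_le_norm a x
  have hGQO : (fun x : E3 => 2 * m / (p - 1) + (3 - p) / (p - 1) * φ x)
      =O[normAtTop] (fun _ : E3 => (1:ℝ)) :=
    (isBigO_const_const _ one_ne_zero _).add (hφO.const_mul_left _)
  have hGPO : (fun x : E3 => β * (3-p) / 2 * (m + φ x))
      =O[normAtTop] (fun _ : E3 => (1:ℝ)) :=
    (((isBigO_const_const _ one_ne_zero _).add hφO).const_mul_left _)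
  have hGSO : (fun x : E3 => 2 * m + (3 - p) / 2 * φ x)
      =O[normAtTop] (fun _ : E3 => (1:ℝ)) :=
    (isBigO_const_const _ one_ne_zero _).add (hφO.const_mul_left _)
  have hp1O : (fun x : E3 => ‖x‖ * (P x - 1)) =O[normAtTop] (fun _ : E3 => (1:ℝ)) := by
    have := ((Asymptotics.isLittleO_one_iff ℝ).2 hP0).isBigO.sub hGPO
    simpa using this
  have hq1O : (fun x : E3 => ‖x‖ * (Q x - 1)) =O[normAtTop] (fun _ : E3 => (1:ℝ)) := by
    have := ((Asymptotics.isLittleO_one_iff ℝ).2 hQ0).isBigO.sub hGQO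
    simpa using this
  have hs1O : (fun x : E3 => ‖x‖ * (S x - 1)) =O[normAtTop] (fun _ : E3 => (1:ℝ)) := by
    have := ((Asymptotics.isLittleO_one_iff ℝ).2 hS0).isBigO.sub hGSO
    simpa using this
  have hinv : Tendsto (fun x : E3 => ‖x‖⁻¹) normAtTop (nhds 0) :=
    hrt.inv_tendsto_atTop
  -- Step 3: limits of P, Q, S
  have tend_one : ∀ (G : E3 → ℝ), ((fun x : E3 => ‖x‖ * (G x - 1)) =O[normAtTop]
      (fun _ : E3 => (1:ℝ))) → Tendsto G normAtTop (nhds 1) := by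
    intro G hO
    have h0 : Tendsto (fun x : E3 => (‖x‖ * (G x - 1)) * ‖x‖⁻¹) normAtTop (nhds 0) := by
      rw [← Asymptotics.isLittleO_one_iff ℝ]
      have := hO.mul_isLittleO ((Asymptotics.isLittleO_one_iff ℝ).2 hinv)
      simpa using this
    have h1 : Tendsto (fun x : E3 => 1 + (‖x‖ * (G x - 1)) * ‖x‖⁻¹) normAtTop
        (nhds (1 + 0)) := tendsto_const_nhds.add h0
    rw [add_zero] at h1
    refine h1.congr' ?_
    filter_upwards [hev] with x hx
    have hs0 := hs_of x hx
    field_simp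
    ring
  have hP1 : Tendsto P normAtTop (nhds 1) := tend_one P hp1O
  have hQ1 : Tendsto Q normAtTop (nhds 1) := tend_one Q hq1O
  have hS1 : Tendsto S normAtTop (nhds 1) := tend_one S hs1O
  have hrpow1 : ∀ γ : ℝ, Tendsto (fun x : E3 => Q x ^ γ) normAtTop (nhds 1) := by
    intro γ
    have hcont := (Real.continuousAt_rpow_const 1 γ (Or.inl one_ne_zero)).tendsto
    have := hcont.comp hQ1
    simpa [Real.one_rpow, Function.comp_def] using this
  have hPB1 : Tendsto (fun x : E3 => P x ^ (1/β)) normAtTop (nhds 1) := by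
    have hcont := (Real.continuousAt_rpow_const 1 (1/β) (Or.inl one_ne_zero)).tendsto
    have := hcont.comp hP1
    simpa [Real.one_rpow, Function.comp_def] using this
  -- Step 4: second-order terms
  have hT : ∀ γ : ℝ, Tendsto (fun x : E3 =>
      ‖x‖ * (Q x ^ γ - 1) - γ * (‖x‖ * (Q x - 1))) normAtTop (nhds 0) := by
    intro γ
    have hd : HasDerivAt (fun t : ℝ => t ^ γ) (γ * (1:ℝ) ^ (γ-1)) 1 :=
      Real.hasDerivAt_rpow_const (Or.inl one_ne_zero)
    rw [hasDerivAt_iff_isLittleO] at hd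
    have hcomp := hd.comp_tendsto hQ1
    have hlo : (fun x : E3 => Q x ^ γ - 1 - (Q x - 1) * γ) =o[normAtTop]
        fun x : E3 => Q x - 1 := by
      simpa [Real.one_rpow, Function.comp_def] using hcomp
    have h2 := (Asymptotics.isBigO_refl (fun x : E3 => ‖x‖) normAtTop).mul_isLittleO hlo
    have h3 := h2.trans_isBigO hq1O
    have h4 : Tendsto (fun x : E3 => ‖x‖ * (Q x ^ γ - 1 - (Q x - 1) * γ))
        normAtTop (nhds 0) := (Asymptotics.isLittleO_one_iff ℝ).1 h3
    exact h4.congr fun x => by ring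
  -- Step 5: components of N
  have C1 : Tendsto (fun x : E3 => (P x + 1 - 2*(Q x ^ (2-p) * S x)) * (‖x‖*(P x - 1)))
      normAtTop (nhds 0) := by
    have hco : Tendsto (fun x : E3 => P x + 1 - 2*(Q x ^ (2-p) * S x)) normAtTop (nhds 0) := by
      have := (hP1.add (tendsto_const_nhds (x := (1:ℝ)))).sub
        (((hrpow1 (2-p)).mul hS1).const_mul 2)
      norm_num at this
      exact this
    rw [← Asymptotics.isLittleO_one_iff ℝ]
    have := ((Asymptotics.isLittleO_one_iff ℝ).2 hco).mul_isBigO hp1O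
    simpa using this
  have C5 : Tendsto (fun x : E3 => 2*(1 - Q x ^ (2-p)) * (‖x‖*(S x - 1)))
      normAtTop (nhds 0) := by
    have hco : Tendsto (fun x : E3 => 2*(1 - Q x ^ (2-p))) normAtTop (nhds 0) := by
      have := ((tendsto_const_nhds (x := (1:ℝ))).sub (hrpow1 (2-p))).const_mul 2
      norm_num at this
      exact this
    rw [← Asymptotics.isLittleO_one_iff ℝ]
    have := ((Asymptotics.isLittleO_one_iff ℝ).2 hco).mul_isBigO hs1O
    simpa using this
  have C4 : Tendsto (fun x : E3 => (p-1)*(‖x‖*(Q x - 1)) - 2*(‖x‖*(S x - 1)))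
      normAtTop (nhds (2*m)) := by
    have h := ((hQ0.const_mul (p-1)).sub (hS0.const_mul 2)).add_const (2*m)
    have hv : ((p-1)*0 - 2*0) + 2*m = 2*m := by ring
    rw [hv] at h
    refine h.congr fun x => ?_
    field_simp
    ring
  have hN : Tendsto (fun x : E3 => ‖x‖*(P x * P x - 1) + ‖x‖*(Q x ^ (3-p) - 1)
      - 2*(‖x‖*(Q x ^ (2-p) * S x * P x - 1))) normAtTop (nhds (2*m)) := by
    have hsum := ((((C1.add (hT (3-p))).sub ((hT (2-p)).const_mul 2)).add C4).add C5)
    have hv : ((((0 + 0) - 2*0) + 2*m) + 0 : ℝ) = 2*m := by ring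
    rw [hv] at hsum
    refine hsum.congr fun x => ?_
    ring
  have hM : Tendsto (fun x : E3 => (P x ^ (1/β) * P x * P x)⁻¹) normAtTop (nhds 1) := by
    have h := (((hPB1.mul hP1).mul hP1).inv₀ (by norm_num))
    have hv : (((1:ℝ)*1*1))⁻¹ = 1 := by norm_num
    rwa [hv] at h
  have hMN : Tendsto (fun x : E3 => c ^ (1-p) * ((P x ^ (1/β) * P x * P x)⁻¹ *
      (‖x‖*(P x * P x - 1) + ‖x‖*(Q x ^ (3-p) - 1)
        - 2*(‖x‖*(Q x ^ (2-p) * S x * P x - 1)))))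
      normAtTop (nhds (c ^ (1-p) * (1 * (2*m)))) := (hM.mul hN).const_mul _
  have heq : (fun x : E3 => c ^ (1-p) * ((P x ^ (1/β) * P x * P x)⁻¹ *
      (‖x‖*(P x * P x - 1) + ‖x‖*(Q x ^ (3-p) - 1)
        - 2*(‖x‖*(Q x ^ (2-p) * S x * P x - 1))))) =ᶠ[normAtTop] I := by
    filter_upwards [hev] with x hx
    have hsR := hR_of x hx
    have hs0 := hs_of x hx
    rw [hI x hsR]
    exact (alg_key p β c ‖x‖ (‖x‖ ^ β) (u x) (w x) (H x) (P x) (Q x) (S x)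
      hp hp' hc hs0 hβ rfl (hub x hsR) (hwb x hsR)
      (by simp only [hPdef])
      (by simp only [hQdef]; rw [Real.rpow_add_one hs0.ne'])
      (by simp only [hSdef])).symm
  have hfin := hMN.congr' heq
  have hv2 : c ^ (1-p) * (1 * (2*m)) = 2*m*c^(1-p) := by ring
  rwa [hv2] at hfin
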